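/- Let T be a homeomorphism of a compact metric space X. If the chain recurrent set equals the closure of the set of minimal points, CR(X,T) = closure(M(X,T)), then (X,T) has the multishadowing property: for every ε > 0 there exists d > 0 such that every two-sided d-pseudotrajectory is ε-traced by finitely many exact trajectories. -/

import Mathlib

open Metric Filter Set Topology
open scoped Classical

variable {X : Type*}

/-- A set of naturals is syndetic: bounded gaps. -/
def Syndetic (S : Set ℕ) : Prop := ∃ n : ℕ, ∀ m : ℕ, ∃ k ∈ S, m ≤ k ∧ k ≤ m + n

/-- Forward orbit of a point. -/
def fwdOrbit (T : X → X) (y : X) : Set X := Set.range fun k : ℕ => T^[k] y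

/-- A point is minimal (almost periodic): its forward orbit closure is a minimal set. -/
def IsMinimalPt [TopologicalSpace X] (T : X → X) (y : X) : Prop :=
  ∀ z ∈ closure (fwdOrbit T y), closure (fwdOrbit T z) = closure (fwdOrbit T y)

/-- ℤ-iteration of a homeomorphism. -/
noncomputable def zIter [TopologicalSpace X] (T : X ≃ₜ X) (n : ℤ) : X → X :=
  if 0 ≤ n then (⇑T)^[n.toNat] else (⇑T.symm)^[(-n).toNat]

/-- `A` is an `ε`-network: every point of the space is within `ε` of `A`. -/
def IsNet [PseudoMetricSpace X] (ε : ℝ) (A : Set X) : Prop :=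
  ∀ x : X, ∃ a ∈ A, dist x a ≤ ε

/-- A point is nonwandering (w.r.t. forward iterates). -/
def NonWandering [TopologicalSpace X] (T : X → X) (x : X) : Prop :=
  ∀ U : Set X, IsOpen U → x ∈ U → ∃ k : ℕ, 1 ≤ k ∧ ((fun p => T^[k] p) '' U ∩ U).Nonempty

/-- One-sided `d`-pseudotrajectory. -/
def IsPseudoTraj [PseudoMetricSpace X] (T : X → X) (d : ℝ) (x : ℕ → X) : Prop :=
  ∀ k : ℕ, dist (x (k + 1)) (T (x k)) ≤ d

/-- Two-sided `d`-pseudotrajectory. -/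
def IsPseudoTrajZ [PseudoMetricSpace X] (T : X → X) (d : ℝ) (x : ℤ → X) : Prop :=
  ∀ k : ℤ, dist (x (k + 1)) (T (x k)) ≤ d

/-- A chain recurrent point. -/
def ChainRec [PseudoMetricSpace X] (T : X → X) (x : X) : Prop :=
  ∀ d > (0 : ℝ), ∃ n : ℕ, 1 ≤ n ∧ ∃ c : ℕ → X, c 0 = x ∧ c n = x ∧
    ∀ k < n, dist (c (k + 1)) (T (c k)) ≤ d

/-- ω-limit set of a point under a map. -/
def omegaSet [TopologicalSpace X] (T : X → X) (y : X) : Set X :=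
  {p | ∃ φ : ℕ → ℕ, StrictMono φ ∧ Tendsto (fun n => T^[φ n] y) atTop (nhds p)}

/-- The set of recurrent points (`x ∈ ω(x)`). -/
def RecurrentPts [TopologicalSpace X] (T : X → X) : Set X := {x | x ∈ omegaSet T x}

/-- The multishadowing property (for homeomorphisms, two-sided). -/
def Multishadowing [PseudoMetricSpace X] (T : X ≃ₜ X) : Prop :=
  ∀ ε > (0 : ℝ), ∃ d > (0 : ℝ), ∀ x : ℤ → X, IsPseudoTrajZ (⇑T) d x →
    ∃ Y : Finset X, ∀ k : ℤ, ∃ y ∈ Y, dist (x k) (zIter T k y) < ε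

/-- Topological support of a measure: points all of whose open neighborhoods
have positive measure. -/
def msupp [TopologicalSpace X] [MeasurableSpace X] (μ : MeasureTheory.Measure X) : Set X :=
  {x | ∀ U : Set X, IsOpen U → x ∈ U → 0 < μ U}

/-- Counting function for density computations. -/
noncomputable def cnt (K : Set ℕ) (N : ℕ) : ℝ :=
  ((Finset.range (N + 1)).filter (· ∈ K)).card


section ZIterAux
variable [TopologicalSpace X] (T : X ≃ₜ X)

lemma zIter_coe (n : ℕ) : zIter T (n : ℤ) = (⇑T)^[n] := by
  simp [zIter]

lemma zIter_neg_coe (n : ℕ) : zIter T (-(n : ℤ)) = (⇑T.symm)^[n] := by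
  rcases Nat.eq_zero_or_pos n with h | h
  · subst h; simp [zIter]
  · have h0 : ¬ (0 : ℤ) ≤ -(n : ℤ) := by omega
    simp [zIter, h0, h.ne']

lemma zIter_cancel (k : ℤ) (w : X) : zIter T k (zIter T (-k) w) = w := by
  obtain ⟨n, rfl | rfl⟩ := k.eq_nat_or_neg
  · rw [zIter_neg_coe, zIter_coe]
    exact Function.LeftInverse.iterate (T.apply_symm_apply) n w
  · rw [neg_neg, zIter_neg_coe, zIter_coe]
    exact Function.LeftInverse.iterate (T.symm_apply_apply) n w

lemma zIter_iterate_comm (k : ℤ) (j : ℕ) (w : X) :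
    zIter T k ((⇑T)^[j] w) = (⇑T)^[j] (zIter T k w) := by
  have hc : Function.Commute ⇑T ⇑T.symm := by intro x; simp
  obtain ⟨n, rfl | rfl⟩ := k.eq_nat_or_neg
  · rw [zIter_coe, ← Function.iterate_add_apply, ← Function.iterate_add_apply, add_comm]
  · rw [zIter_neg_coe]
    exact (hc.symm.iterate_iterate n j) w
end ZIterAux

/-- A single `e`-chain from `x` back to `x`. -/
def ChainE [PseudoMetricSpace X] (T : X → X) (e : ℝ) (x : X) : Prop :=
  ∃ n : ℕ, 1 ≤ n ∧ ∃ c : ℕ → X, c 0 = x ∧ c n = x ∧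
    ∀ k < n, dist (c (k + 1)) (T (c k)) ≤ e

section Chains
variable [PseudoMetricSpace X] {T : X → X}

lemma chainE_mono {e e' : ℝ} (hee' : e ≤ e') {x : X} (hx : ChainE T e x) : ChainE T e' x := by
  obtain ⟨n, hn, c, h0, h1, hc⟩ := hx
  exact ⟨n, hn, c, h0, h1, fun k hk => (hc k hk).trans hee'⟩

/-- Perturbation of closed chains: replacing both endpoints of an `e`-chain by a
nearby point `p` gives an `(e + δ + δ')`-chain through `p`. -/
lemma chain_transfer {e δ δ' : ℝ} {p : X} {c : ℕ → X} {n : ℕ}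
    (hn : 1 ≤ n) (hc : ∀ k < n, dist (c (k + 1)) (T (c k)) ≤ e)
    (h0 : dist p (c 0) ≤ δ) (h1 : dist p (c n) ≤ δ)
    (hT : dist (T p) (T (c 0)) ≤ δ') :
    ChainE T (e + δ + δ') p := by
  have hδ : 0 ≤ δ := le_trans dist_nonneg h0
  have hδ' : 0 ≤ δ' := le_trans dist_nonneg hT
  have he : 0 ≤ e := le_trans dist_nonneg (hc 0 hn)
  have hTc : dist (T (c 0)) (T p) ≤ δ' := dist_comm (T p) (T (c 0)) ▸ hT
  refine ⟨n, hn, fun k => if k = 0 ∨ k = n then p else c k, by simp, by simp, ?_⟩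
  intro k hk
  simp only
  have hkn : k ≠ n := Nat.ne_of_lt hk
  by_cases hk0 : k = 0
  · subst hk0
    rw [if_pos (Or.inl rfl)]
    by_cases hn1 : n = 1
    · subst hn1
      rw [if_pos (Or.inr rfl)]
      have h2 : dist (c 1) (T (c 0)) ≤ e := hc 0 hn
      calc dist p (T p) ≤ dist p (c 1) + dist (c 1) (T (c 0)) + dist (T (c 0)) (T p) :=
            dist_triangle4 _ _ _ _
        _ ≤ e + δ + δ' := by linarith
    · have h1ne : ¬ (0 + 1 = 0 ∨ 0 + 1 = n) := by omega
      rw [if_neg h1ne]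
      have h2 : dist (c (0 + 1)) (T (c 0)) ≤ e := hc 0 hn
      calc dist (c (0 + 1)) (T p) ≤ dist (c (0 + 1)) (T (c 0)) + dist (T (c 0)) (T p) :=
            dist_triangle _ _ _
        _ ≤ e + δ + δ' := by linarith
  · have hne : ¬ (k = 0 ∨ k = n) := by tauto
    by_cases hk1 : k + 1 = n
    · rw [if_pos (Or.inr hk1), if_neg hne]
      have h2 : dist (c (k + 1)) (T (c k)) ≤ e := hc k hk
      rw [hk1] at h2
      calc dist p (T (c k)) ≤ dist p (c n) + dist (c n) (T (c k)) := dist_triangle _ _ _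
        _ ≤ e + δ + δ' := by linarith
    · have hne' : ¬ (k + 1 = 0 ∨ k + 1 = n) := by omega
      rw [if_neg hne', if_neg hne]
      calc dist (c (k + 1)) (T (c k)) ≤ e := hc k hk
        _ ≤ e + δ + δ' := by linarith
end Chains

section Compact
variable [MetricSpace X] [CompactSpace X]

/-- Key compactness lemma: points admitting `e`-chains for small `e` are close to
the chain recurrent set. -/
lemma chainE_close_CR (T : X ≃ₜ X) {β : ℝ} (hβ : 0 < β) :
    ∃ e > (0 : ℝ), ∀ q : X, ChainE (⇑T) e q →
      ∃ p : X, ChainRec (⇑T) p ∧ dist q p < β := by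
  by_contra hcon
  push_neg at hcon
  have hq : ∀ n : ℕ, ∃ q : X, ChainE (⇑T) (1 / (n + 1)) q ∧
      ∀ p : X, ChainRec (⇑T) p → β ≤ dist q p := by
    intro n
    have hpos : (0 : ℝ) < 1 / (n + 1) := by positivity
    exact hcon (1 / (n + 1)) hpos
  choose q hq1 hq2 using hq
  obtain ⟨p0, -, φ, hφ, hten⟩ := isCompact_univ.tendsto_subseq (fun n => mem_univ (q n))
  have hCR : ChainRec (⇑T) p0 := by
    intro e he
    have hcont : ContinuousAt (⇑T) p0 := T.continuous.continuousAt
    obtain ⟨δ1, hδ1, hδ1p⟩ := Metric.continuousAt_iff.mp hcont (e / 3) (by linarith)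
    obtain ⟨N1, hN1⟩ : ∃ N : ℕ, (1 : ℝ) / (N + 1) ≤ e / 3 := by
      obtain ⟨N, hN⟩ := exists_nat_one_div_lt (show (0:ℝ) < e/3 by linarith)
      exact ⟨N, le_of_lt hN⟩
    obtain ⟨N2, hN2⟩ := (Metric.tendsto_atTop.mp hten) (min δ1 (e / 3)) (by positivity)
    set n := max N1 N2 with hndef
    have hdq : dist (q (φ n)) p0 < min δ1 (e / 3) := hN2 n (le_max_right _ _)
    obtain ⟨nc, hnc, c, hc0, hcn, hc⟩ := hq1 (φ n)
    have hbound : (1 : ℝ) / (φ n + 1) ≤ e / 3 := by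
      have h1 : N1 ≤ φ n := le_trans (le_max_left _ _) (hφ.le_apply)
      have hle : (N1 : ℝ) + 1 ≤ (φ n : ℝ) + 1 := by exact_mod_cast Nat.add_le_add_right h1 1
      have := one_div_le_one_div_of_le (by positivity : (0:ℝ) < (N1:ℝ) + 1) hle
      linarith
    have hch : ChainE (⇑T) (e / 3 + e / 3 + e / 3) p0 := by
      apply chain_transfer hnc (fun k hk => (hc k hk).trans hbound)
      · rw [hc0, dist_comm]; exact le_of_lt (lt_of_lt_of_le hdq (min_le_right _ _))
      · rw [hcn, dist_comm]; exact le_of_lt (lt_of_lt_of_le hdq (min_le_right _ _))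
      · rw [hc0, dist_comm]
        exact le_of_lt (hδ1p (lt_of_lt_of_le hdq (min_le_left δ1 (e/3))))
    exact chainE_mono (by linarith) hch
  obtain ⟨N3, hN3⟩ := (Metric.tendsto_atTop.mp hten) β hβ
  have hA := hq2 (φ N3) p0 hCR
  have hB : dist (q (φ N3)) p0 < β := hN3 N3 le_rfl
  linarith
end Compact


section FarFinite
variable [MetricSpace X] [CompactSpace X]

lemma far_finite (T : X ≃ₜ X) {β : ℝ} (hβ : 0 < β) :
    ∃ d > (0 : ℝ), ∀ x : ℤ → X, IsPseudoTrajZ (⇑T) d x →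
      {k : ℤ | ∀ p : X, ChainRec (⇑T) p → β ≤ dist (x k) p}.Finite := by
  obtain ⟨e0, he0, hΩ⟩ := chainE_close_CR T hβ
  refine ⟨e0 / 3, by linarith, ?_⟩
  intro x hx
  by_contra hinf
  set S := {k : ℤ | ∀ p : X, ChainRec (⇑T) p → β ≤ dist (x k) p} with hSdef
  have hS : S.Infinite := hinf
  set emb := hS.natEmbedding with hembdef
  obtain ⟨p0, -, φ, hφ, hten⟩ :=
    isCompact_univ.tendsto_subseq (fun i : ℕ => mem_univ (x ((emb i : ↥S) : ℤ)))
  have hcont : ContinuousAt (⇑T) p0 := T.continuous.continuousAt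
  obtain ⟨δ1, hδ1, hδ1p⟩ := Metric.continuousAt_iff.mp hcont (e0 / 3) (by linarith)
  have hδ0 : (0:ℝ) < min δ1 (e0 / 3) := by positivity
  obtain ⟨N, hN⟩ := (Metric.tendsto_atTop.mp hten) (min δ1 (e0 / 3)) hδ0
  -- the two times
  set a : ℤ := ((emb (φ N) : ↥S) : ℤ) with hadef
  set b : ℤ := ((emb (φ (N + 1)) : ↥S) : ℤ) with hbdef
  have hab : a ≠ b := by
    intro hEq
    have h1 : (emb (φ N) : ↥S) = (emb (φ (N + 1)) : ↥S) := Subtype.ext hEq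
    have h2 : φ N = φ (N + 1) := emb.injective h1
    exact absurd h2 (hφ.injective.ne (by omega))
  have hda : dist (x a) p0 < min δ1 (e0 / 3) := hN N le_rfl
  have hdb : dist (x b) p0 < min δ1 (e0 / 3) := hN (N + 1) (by omega)
  set s : ℤ := min a b with hsdef
  set t : ℤ := max a b with htdef
  have hst : s < t := min_lt_max.mpr hab
  have hds : dist (x s) p0 < min δ1 (e0 / 3) := by
    rcases min_choice a b with hm | hm <;> rw [hsdef, hm] <;> assumption
  have hdt : dist (x t) p0 < min δ1 (e0 / 3) := by
    rcases max_choice a b with hm | hm <;> rw [htdef, hm] <;> assumption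
  -- build the chain
  set n : ℕ := (t - s).toNat with hndef
  have hn : 1 ≤ n := by omega
  have hch : ChainE (⇑T) (e0 / 3 + e0 / 3 + e0 / 3) p0 := by
    apply chain_transfer (c := fun k : ℕ => x (s + k)) (n := n) hn
    · intro k hk
      have hrw : s + ((k : ℤ) + 1) = (s + k) + 1 := by ring
      have := hx (s + k)
      calc dist (x (s + ((k:ℕ)+1 : ℕ))) (T (x (s + k))) =
            dist (x ((s + k) + 1)) (T (x (s + k))) := by rw [show ((((k:ℕ)+1 : ℕ)):ℤ) = (k:ℤ)+1 by push_cast; ring, hrw]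
        _ ≤ e0 / 3 := this
    · simpa using le_of_lt (lt_of_lt_of_le (dist_comm (x s) p0 ▸ hds) (min_le_right _ _))
    · have hxt : s + (n : ℤ) = t := by omega
      rw [hxt]
      simpa using le_of_lt (lt_of_lt_of_le (dist_comm (x t) p0 ▸ hdt) (min_le_right _ _))
    · have h1 : dist (T (x (s + (0:ℕ)))) (T p0) < e0 / 3 := by
        apply hδ1p
        simpa using lt_of_lt_of_le hds (min_le_left _ _)
      rw [dist_comm] at h1
      exact le_of_lt h1
  have hch' : ChainE (⇑T) e0 p0 := chainE_mono (by linarith) hch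
  obtain ⟨p, hpCR, hpd⟩ := hΩ p0 hch'
  -- final contradiction
  have hgap : 0 < β - dist p0 p := by linarith
  obtain ⟨N4, hN4⟩ := (Metric.tendsto_atTop.mp hten) (β - dist p0 p) hgap
  set k0 : ℤ := ((emb (φ N4) : ↥S) : ℤ) with hk0def
  have hk0S : k0 ∈ S := (emb (φ N4)).2
  have hk0close : dist (x k0) p0 < β - dist p0 p := hN4 N4 le_rfl
  have hk0far : β ≤ dist (x k0) p := hk0S p hpCR
  have : dist (x k0) p ≤ dist (x k0) p0 + dist p0 p := dist_triangle _ _ _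
  linarith
end FarFinite

section Minimal
variable [MetricSpace X] [CompactSpace X]

lemma minimal_syndetic (T : X ≃ₜ X) {m : X} (hm : IsMinimalPt (⇑T) m)
    {r : ℝ} (hr : 0 < r) :
    ∃ L : ℕ, ∀ k : ℤ, ∃ j ≤ L, dist (zIter T k ((⇑T)^[j] m)) m < r := by
  set Λ := closure (fwdOrbit (⇑T) m) with hΛdef
  have hmΛ : m ∈ Λ := subset_closure ⟨0, rfl⟩
  have hTm : T m ∈ Λ := subset_closure ⟨1, by simp⟩
  -- T '' Λ = Λ
  have himg : ⇑T '' fwdOrbit (⇑T) m = fwdOrbit (⇑T) (T m) := by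
    rw [fwdOrbit, fwdOrbit, ← Set.range_comp]
    apply congrArg
    funext k
    show T ((⇑T)^[k] m) = (⇑T)^[k] (T m)
    rw [← Function.iterate_succ_apply' (⇑T) k m, Function.iterate_succ_apply]
  have hTΛ : ⇑T '' Λ = Λ := by
    rw [hΛdef, T.image_closure, himg]
    exact hm (T m) hTm
  have hfwd : ∀ z ∈ Λ, T z ∈ Λ := fun z hz => hTΛ ▸ Set.mem_image_of_mem _ hz
  have hbwd : ∀ z ∈ Λ, T.symm z ∈ Λ := by
    intro z hz
    rw [← hTΛ] at hz
    obtain ⟨w, hw, hwz⟩ := hz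
    rwa [← hwz, T.symm_apply_apply]
  have hiterF : ∀ (nn : ℕ) (z : X), z ∈ Λ → (⇑T)^[nn] z ∈ Λ := by
    intro nn
    induction nn with
    | zero => intro z hz; simpa using hz
    | succ n ih =>
        intro z hz
        rw [Function.iterate_succ_apply]
        exact ih _ (hfwd z hz)
  have hiterB : ∀ (nn : ℕ) (z : X), z ∈ Λ → (⇑T.symm)^[nn] z ∈ Λ := by
    intro nn
    induction nn with
    | zero => intro z hz; simpa using hz
    | succ n ih =>
        intro z hz
        rw [Function.iterate_succ_apply]
        exact ih _ (hbwd z hz)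
  have hzmem : ∀ (k : ℤ) (z : X), z ∈ Λ → zIter T k z ∈ Λ := by
    intro k z hz
    obtain ⟨nn, rfl | rfl⟩ := k.eq_nat_or_neg
    · rw [zIter_coe]; exact hiterF nn z hz
    · rw [zIter_neg_coe]; exact hiterB nn z hz
  -- open cover by return times
  have hΛc : IsCompact Λ := isClosed_closure.isCompact
  have hcov : Λ ⊆ ⋃ j : ℕ, (⇑T)^[j] ⁻¹' (Metric.ball m r) := by
    intro z hz
    have hmz : m ∈ closure (fwdOrbit (⇑T) z) := (hm z hz).symm ▸ hmΛ
    obtain ⟨w, hw1, hw2⟩ := Metric.mem_closure_iff.mp hmz r hr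
    obtain ⟨j, hj⟩ := hw1
    refine Set.mem_iUnion.mpr ⟨j, ?_⟩
    simp only [Set.mem_preimage, Metric.mem_ball]
    have hj' : (⇑T)^[j] z = w := hj
    rw [hj', dist_comm]
    exact hw2
  obtain ⟨tf, htf⟩ := hΛc.elim_finite_subcover (fun j : ℕ => (⇑T)^[j] ⁻¹' (Metric.ball m r))
    (fun j => (Metric.isOpen_ball).preimage (T.continuous.iterate j)) hcov
  refine ⟨tf.sup id, ?_⟩
  intro k
  have hz : zIter T k m ∈ Λ := hzmem k m hmΛ
  obtain ⟨j, hjt, hjball⟩ := Set.mem_iUnion₂.mp (htf hz)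
  refine ⟨j, Finset.le_sup (f := id) hjt, ?_⟩
  rw [zIter_iterate_comm]
  simpa using hjball
end Minimal


theorem stmt10 [MetricSpace X] [CompactSpace X] (T : X ≃ₜ X)
    (h : {x : X | ChainRec (⇑T) x} = closure {y : X | IsMinimalPt (⇑T) y}) :
    Multishadowing T := by
  intro ε hε
  have hε4 : 0 < ε / 4 := by linarith
  have hCRc : IsCompact {x : X | ChainRec (⇑T) x} := by
    rw [h]; exact isClosed_closure.isCompact
  set Ms := {y : X | IsMinimalPt (⇑T) y} with hMs
  have hcov : {x : X | ChainRec (⇑T) x} ⊆ ⋃ y : ↥Ms, Metric.ball (y : X) (ε / 4) := by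
    intro p hp
    rw [h] at hp
    obtain ⟨mm, hmm, hdm⟩ := Metric.mem_closure_iff.mp hp (ε / 4) hε4
    exact Set.mem_iUnion.mpr ⟨⟨mm, hmm⟩, by simpa [Metric.mem_ball] using hdm⟩
  obtain ⟨G, hG⟩ := hCRc.elim_finite_subcover (fun y : ↥Ms => Metric.ball (y : X) (ε / 4))
    (fun y => Metric.isOpen_ball) hcov
  have hLex : ∀ y : ↥Ms, ∃ L : ℕ, ∀ k : ℤ,
      ∃ j ≤ L, dist (zIter T k ((⇑T)^[j] (y : X))) (y : X) < ε / 4 :=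
    fun y => minimal_syndetic T y.2 hε4
  choose L hL using hLex
  obtain ⟨d, hd, hfar⟩ := far_finite T hε4
  refine ⟨d, hd, ?_⟩
  intro x hx
  have hSfin := hfar x hx
  refine ⟨(hSfin.toFinset.image fun k => zIter T (-k) (x k)) ∪
    G.biUnion (fun y => (Finset.range (L y + 1)).image fun j => (⇑T)^[j] (y : X)), ?_⟩
  intro k
  by_cases hk : ∀ p : X, ChainRec (⇑T) p → ε / 4 ≤ dist (x k) p
  · refine ⟨zIter T (-k) (x k), ?_, ?_⟩
    · exact Finset.mem_union_left _
        (Finset.mem_image.mpr ⟨k, hSfin.mem_toFinset.mpr hk, rfl⟩)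
    · rw [zIter_cancel, dist_self]; exact hε
  · push_neg at hk
    obtain ⟨p, hpCR, hpd⟩ := hk
    obtain ⟨y, hyG, hyball⟩ := Set.mem_iUnion₂.mp (hG hpCR)
    obtain ⟨j, hjL, hjd⟩ := hL y k
    refine ⟨(⇑T)^[j] (y : X), ?_, ?_⟩
    · exact Finset.mem_union_right _ (Finset.mem_biUnion.mpr
        ⟨y, hyG, Finset.mem_image.mpr ⟨j, Finset.mem_range.mpr (by omega), rfl⟩⟩)
    · have h1 : dist p (y : X) < ε / 4 := by simpa [Metric.mem_ball] using hyball
      have h2 : dist (y : X) (zIter T k ((⇑T)^[j] (y : X))) < ε / 4 := by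
        rw [dist_comm]; exact hjd
      calc dist (x k) (zIter T k ((⇑T)^[j] (y : X))) ≤
            dist (x k) p + dist p (y : X) + dist (y : X) (zIter T k ((⇑T)^[j] (y : X))) :=
            dist_triangle4 _ _ _ _
        _ < ε / 4 + ε / 4 + ε / 4 := add_lt_add (add_lt_add hpd h1) h2
        _ ≤ ε := by linarith
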